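/- Let d ≥ 2, Ω ⊆ ℝ^d be open, ε ∈ (0,1/4], r > 0, ν a unit vector, and let x₀ ∈ ∂Ω be an (ε,r)-good point with respect to ν. Then for every x ∈ Ω ∩ Γ_r(x₀,ε) and every t > 0 one has 0 ≤ e^{−d_Ω(x)²/t} − e^{−|x−x₀|²/t} ≤ 4ε·e^{−d_Ω(x)²/(2t)}. -/
import Mathlib


open MeasureTheory Metric Set
open scoped InnerProductSpace

/-- For `0 < x ≤ y`, `e^{-x} - e^{-y} ≤ (log y - log x)/e`. -/
lemma aux_exp_diff_le {x y : ℝ} (hx : 0 < x) (hxy : x ≤ y) :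
    Real.exp (-x) - Real.exp (-y) ≤ (Real.log y - Real.log x) / Real.exp 1 := by
  have hy : 0 < y := hx.trans_le hxy
  have h1 : (∫ u in x..y, Real.exp (-u)) = Real.exp (-x) - Real.exp (-y) := by
    rw [intervalIntegral.integral_comp_neg (fun u => Real.exp u), integral_exp]
  have h2 : (∫ u in x..y, (Real.exp 1)⁻¹ * u⁻¹)
      = (Real.log y - Real.log x) / Real.exp 1 := by
    rw [intervalIntegral.integral_const_mul, integral_inv_of_pos hx hy,
      Real.log_div hy.ne' hx.ne']
    ring
  have hf : IntervalIntegrable (fun u => Real.exp (-u)) volume x y :=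
    (Real.continuous_exp.comp continuous_neg).intervalIntegrable x y
  have hg : IntervalIntegrable (fun u : ℝ => (Real.exp 1)⁻¹ * u⁻¹) volume x y := by
    apply ContinuousOn.intervalIntegrable
    apply ContinuousOn.mul continuousOn_const
    apply ContinuousOn.inv₀ continuousOn_id
    intro u hu
    rw [Set.uIcc_of_le hxy] at hu
    exact ne_of_gt (lt_of_lt_of_le hx hu.1)
  have hle : ∀ u ∈ Set.Icc x y, Real.exp (-u) ≤ (Real.exp 1)⁻¹ * u⁻¹ := by
    intro u hu
    have hu0 : 0 < u := lt_of_lt_of_le hx hu.1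
    have h3 : u * Real.exp 1 ≤ Real.exp u := by
      have h4 := Real.add_one_le_exp (u - 1)
      have h5 : Real.exp (u - 1) = Real.exp u / Real.exp 1 := Real.exp_sub u 1
      rw [h5] at h4
      have h6 : u ≤ Real.exp u / Real.exp 1 := by linarith
      calc u * Real.exp 1 ≤ (Real.exp u / Real.exp 1) * Real.exp 1 :=
            mul_le_mul_of_nonneg_right h6 (Real.exp_pos 1).le
        _ = Real.exp u := by field_simp
    rw [Real.exp_neg]
    rw [show (Real.exp 1)⁻¹ * u⁻¹ = (u * Real.exp 1)⁻¹ by rw [mul_inv]; ring]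
    exact inv_anti₀ (by positivity) h3
  calc Real.exp (-x) - Real.exp (-y) = ∫ u in x..y, Real.exp (-u) := h1.symm
    _ ≤ ∫ u in x..y, (Real.exp 1)⁻¹ * u⁻¹ :=
        intervalIntegral.integral_mono_on hxy hf hg hle
    _ = (Real.log y - Real.log x) / Real.exp 1 := h2

/-- The key elementary inequality in `ε`. -/
lemma aux_eps_bound {ε : ℝ} (h1 : 0 < ε) (h2 : ε ≤ 1/4) :
    (1 - ((1 - ε - ε^2)/(1 + ε))^2) + 2 * ((((1 - ε - ε^2)/(1 + ε)))⁻¹ - 1)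
      ≤ 4 * ε * Real.exp 1 := by
  have hN : (0:ℝ) < 1 - ε - ε^2 := by nlinarith
  have hP : (0:ℝ) < 1 + ε := by linarith
  have he : (2.7182818283:ℝ) < Real.exp 1 := Real.exp_one_gt_d9
  rw [inv_div]
  have hrw : (1 - ((1 - ε - ε^2)/(1 + ε))^2) + 2 * ((1 + ε)/(1 - ε - ε^2) - 1)
      = (2*(1+ε)^3 - (1+ε)^2*(1-ε-ε^2) - (1-ε-ε^2)^3) / ((1+ε)^2*(1-ε-ε^2)) := by
    field_simp
    ring
  rw [hrw, div_le_iff₀ (by positivity)]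
  have hX : (0:ℝ) ≤ (1+ε)^2*(1-ε-ε^2) := by positivity
  have hstep : 4*ε*(2.7182818283:ℝ)*((1+ε)^2*(1-ε-ε^2))
      ≤ 4*ε*Real.exp 1*((1+ε)^2*(1-ε-ε^2)) := by
    gcongr
  have hp3 : ε^3 ≤ ε/16 := by nlinarith
  have hp4 : ε^4 ≤ ε/64 := by nlinarith
  have hp5 : ε^5 ≤ ε/256 := by nlinarith
  have hp6 : ε^6 ≤ ε/1024 := by nlinarith
  nlinarith [hp3, hp4, hp5, hp6, sq_nonneg ε, h1]

set_option maxHeartbeats 1000000 in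
/-- For an `(ε,r)`-good point `x₀ ∈ ∂Ω` with `ε ∈ (0,1/4]` and `x ∈ Ω ∩ Γ_r(x₀,ε)`, one has
`0 ≤ e^{−d_Ω(x)²/t} − e^{−|x−x₀|²/t} ≤ 4ε e^{−d_Ω(x)²/(2t)}` for all `t > 0`. -/
theorem stmt_3 (d : ℕ) (hd : 2 ≤ d) (Ω : Set (EuclideanSpace ℝ (Fin d))) (hΩ : IsOpen Ω)
    (ε r : ℝ) (hε : ε ∈ Set.Ioc (0:ℝ) (1/4)) (hr : 0 < r)
    (ν : EuclideanSpace ℝ (Fin d)) (hν : ‖ν‖ = 1)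
    (x₀ : EuclideanSpace ℝ (Fin d)) (hx₀ : x₀ ∈ frontier Ω)
    (hgood : ∀ z ∈ frontier Ω ∩ ball x₀ r, |⟪z - x₀, ν⟫_ℝ| ≤ ε * ‖z - x₀‖)
    (x : EuclideanSpace ℝ (Fin d)) (hxΩ : x ∈ Ω)
    (hxΓ : ⟪x - x₀, ν⟫_ℝ < -Real.sqrt (1 - ε ^ 2) * ‖x - x₀‖)
    (hxB : x ∈ ball x₀ (r / 2))
    (t : ℝ) (ht : 0 < t) :
    0 ≤ Real.exp (-(Metric.infDist x Ωᶜ) ^ 2 / t) - Real.exp (-‖x - x₀‖ ^ 2 / t) ∧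
    Real.exp (-(Metric.infDist x Ωᶜ) ^ 2 / t) - Real.exp (-‖x - x₀‖ ^ 2 / t)
      ≤ 4 * ε * Real.exp (-(Metric.infDist x Ωᶜ) ^ 2 / (2 * t)) := by
  obtain ⟨hε0, hε4⟩ := hε
  set D := Metric.infDist x Ωᶜ with hDdef
  set R := ‖x - x₀‖ with hRdef
  have hΩc_closed : IsClosed Ωᶜ := hΩ.isClosed_compl
  have hx₀ne : x₀ ∉ Ω := by
    rw [hΩ.frontier_eq] at hx₀
    exact hx₀.2
  have hx₀c : x₀ ∈ Ωᶜ := hx₀ne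
  have hne : (Ωᶜ).Nonempty := ⟨x₀, hx₀c⟩
  have hRpos : 0 < R := by
    rw [hRdef, norm_pos_iff, sub_ne_zero]
    intro h
    exact hx₀ne (h ▸ hxΩ)
  have hDR : D ≤ R := by
    have h : D ≤ dist x x₀ := Metric.infDist_le_dist_of_mem hx₀c
    rwa [dist_eq_norm] at h
  have hDpos : 0 < D := by
    rw [hDdef]
    exact (hΩc_closed.notMem_iff_infDist_pos hne).mp (fun hc => hc hxΩ)
  obtain ⟨y, hyC, hyd⟩ := hΩc_closed.exists_infDist_eq_dist hne x
  have hdist_xy : ‖x - y‖ = D := by rw [hDdef, hyd, dist_eq_norm]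
  have hball : ball x D ⊆ Ω := by
    intro z hz
    by_contra hzc
    have h1 : D ≤ dist x z := Metric.infDist_le_dist_of_mem hzc
    rw [mem_ball, dist_comm] at hz
    linarith
  have hyfr : y ∈ frontier Ω := by
    rw [hΩ.frontier_eq]
    refine ⟨?_, hyC⟩
    have h1 : y ∈ closedBall x D := by
      rw [mem_closedBall, dist_comm, ← hyd]
    rw [← closure_ball x hDpos.ne'] at h1
    exact closure_mono hball h1
  have hxBR : R < r / 2 := by
    have := mem_ball.mp hxB
    rwa [dist_eq_norm] at this
  have hyB : y ∈ ball x₀ r := by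
    rw [mem_ball]
    calc dist y x₀ ≤ dist y x + dist x x₀ := dist_triangle _ _ _
      _ = D + R := by rw [dist_comm y x, hyd.symm, dist_eq_norm, ← hRdef]
      _ < r := by linarith
  have hygood := hgood y ⟨hyfr, hyB⟩
  have hyx₀ : ‖y - x₀‖ ≤ D + R := by
    calc ‖y - x₀‖ = ‖(y - x) + (x - x₀)‖ := by rw [sub_add_sub_cancel]
      _ ≤ ‖y - x‖ + ‖x - x₀‖ := norm_add_le _ _
      _ = D + R := by rw [norm_sub_rev, hdist_xy]
  have hxyin : ⟪x - y, ν⟫_ℝ = ⟪x - x₀, ν⟫_ℝ - ⟪y - x₀, ν⟫_ℝ := by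
    rw [← inner_sub_left, sub_sub_sub_cancel_right]
  have hCS : |⟪x - y, ν⟫_ℝ| ≤ D := by
    calc |⟪x - y, ν⟫_ℝ| ≤ ‖x - y‖ * ‖ν‖ := abs_real_inner_le_norm _ _
      _ = D := by rw [hν, hdist_xy, mul_one]
  have hsqrt : 1 - ε^2 ≤ Real.sqrt (1 - ε^2) := by
    rw [Real.le_sqrt (by nlinarith) (by nlinarith)]
    nlinarith [mul_nonneg (by nlinarith : (0:ℝ) ≤ 1 - ε^2) (sq_nonneg ε)]
  have key : (1 - ε - ε^2) * R < (1 + ε) * D := by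
    have h1 : -D ≤ ⟪x - y, ν⟫_ℝ := (abs_le.mp hCS).1
    have h2 : -⟪y - x₀, ν⟫_ℝ ≤ ε * ‖y - x₀‖ := by
      have := (abs_le.mp hygood).1
      linarith
    have h3 : ε * ‖y - x₀‖ ≤ ε * (D + R) := mul_le_mul_of_nonneg_left hyx₀ hε0.le
    have h4 : (1 - ε^2) * R ≤ Real.sqrt (1 - ε^2) * R :=
      mul_le_mul_of_nonneg_right hsqrt hRpos.le
    have h5 : ⟪x - y, ν⟫_ℝ < -Real.sqrt (1 - ε^2) * R + ε * (D + R) := by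
      rw [hxyin]
      linarith [hxΓ]
    nlinarith
  set q : ℝ := (1 - ε - ε^2)/(1 + ε) with hqdef
  have hNpos : (0:ℝ) < 1 - ε - ε^2 := by nlinarith
  have hPpos : (0:ℝ) < 1 + ε := by linarith
  have hqpos : 0 < q := div_pos hNpos hPpos
  have hq1 : q < 1 := by
    rw [hqdef, div_lt_one hPpos]
    nlinarith
  have hqD : q * R < D := by
    rw [hqdef, div_mul_eq_mul_div, div_lt_iff₀ hPpos]
    linarith
  have ha : q^2 * R^2 < D^2 := by
    have h0 : 0 ≤ q * R := by positivity
    have h := pow_lt_pow_left₀ hqD h0 (two_ne_zero)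
    rwa [mul_pow] at h
  have hab : D^2 ≤ R^2 := by nlinarith
  have hapos : 0 < D^2 := by positivity
  have hbpos : 0 < R^2 := by positivity
  constructor
  · have h1 : -R^2/t ≤ -D^2/t := (div_le_div_iff_of_pos_right ht).mpr (by nlinarith)
    have hgoal : Real.exp (-R ^ 2 / t) ≤ Real.exp (-D ^ 2 / t) := Real.exp_le_exp.mpr h1
    linarith
  · set X := D^2/(2*t) with hXdef
    set Y := (2*R^2 - D^2)/(2*t) with hYdef
    have hXpos : 0 < X := by rw [hXdef]; positivity
    have hXY : X ≤ Y := by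
      rw [hXdef, hYdef]
      exact (div_le_div_iff_of_pos_right (by linarith)).mpr (by linarith)
    have hYpos : 0 < Y := lt_of_lt_of_le hXpos hXY
    have hlog : Real.log Y - Real.log X ≤ 4 * ε * Real.exp 1 := by
      have hl1 : Real.log Y - Real.log X
          = Real.log (2*R^2 - D^2) - Real.log (D^2) := by
        rw [hXdef, hYdef, Real.log_div (by nlinarith) (by positivity),
          Real.log_div (by positivity) (by positivity)]
        ring
      have hl2 : Real.log (2*R^2 - D^2) ≤ Real.log ((2 - q^2) * R^2) := by
        apply Real.log_le_log (by nlinarith)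
        nlinarith
      have hl3 : Real.log ((2 - q^2) * R^2) = Real.log (2 - q^2) + Real.log (R^2) :=
        Real.log_mul (by nlinarith) (by positivity)
      have hl4 : Real.log (q^2) + Real.log (R^2) = Real.log (q^2 * R^2) :=
        (Real.log_mul (by positivity) (by positivity)).symm
      have hl5 : Real.log (q^2 * R^2) ≤ Real.log (D^2) :=
        Real.log_le_log (by positivity) ha.le
      have hl6 : Real.log (2 - q^2) ≤ 1 - q^2 := by
        have := Real.log_le_sub_one_of_pos (x := 2 - q^2) (by nlinarith)
        linarith
      have hl7 : -Real.log (q^2) ≤ 2 * (q⁻¹ - 1) := by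
        have h8 : Real.log (q^2) = 2 * Real.log q := by
          rw [Real.log_pow]; norm_num
        have h9 : Real.log q⁻¹ ≤ q⁻¹ - 1 := Real.log_le_sub_one_of_pos (by positivity)
        rw [Real.log_inv] at h9
        linarith
      have hfinal := aux_eps_bound hε0 hε4
      rw [← hqdef] at hfinal
      linarith
    have hmain : Real.exp (-X) - Real.exp (-Y) ≤ 4 * ε := by
      calc Real.exp (-X) - Real.exp (-Y)
          ≤ (Real.log Y - Real.log X) / Real.exp 1 := aux_exp_diff_le hXpos hXY
        _ ≤ 4 * ε := by
            rw [div_le_iff₀ (Real.exp_pos 1)]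
            linarith
    have hsplit1 : Real.exp (-D^2/t) = Real.exp (-D^2/(2*t)) * Real.exp (-X) := by
      rw [← Real.exp_add, hXdef]
      congr 1
      field_simp
      ring
    have hsplit2 : Real.exp (-R^2/t) = Real.exp (-D^2/(2*t)) * Real.exp (-Y) := by
      rw [← Real.exp_add, hYdef]
      congr 1
      field_simp
      ring
    calc Real.exp (-D^2/t) - Real.exp (-R^2/t)
        = Real.exp (-D^2/(2*t)) * (Real.exp (-X) - Real.exp (-Y)) := by
          rw [hsplit1, hsplit2]; ring
      _ ≤ Real.exp (-D^2/(2*t)) * (4 * ε) :=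
          mul_le_mul_of_nonneg_left hmain (Real.exp_pos _).le
      _ = 4 * ε * Real.exp (-D^2/(2*t)) := by ring
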